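/- Let V be a topological vector space, A ⊆ V cs-closed, and G ⊆ D ⊆ cl(A). Suppose G is pre-cs-compact and that for every r > 0 and d ∈ D, the set (d − rG) ∩ A is nonempty. Then D ⊆ αA for every α > 1. -/

import Mathlib

open Pointwise

/-- A set is pre-cs-compact if every convex series of its elements converges. -/
def IsPreCsCompact {V : Type*} [AddCommGroup V] [Module ℝ V] [TopologicalSpace V]
    (G : Set V) : Prop :=
  ∀ (g : ℕ → V) (l : ℕ → ℝ), (∀ n, g n ∈ G) → (∀ n, 0 ≤ l n) → HasSum l 1 →
    ∃ x : V, HasSum (fun n => l n • g n) x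

/-- A set is cs-closed if every convergent convex series of its elements has sum in it. -/
def IsCsClosed {V : Type*} [AddCommGroup V] [Module ℝ V] [TopologicalSpace V]
    (A : Set V) : Prop :=
  ∀ (a : ℕ → V) (l : ℕ → ℝ), (∀ n, a n ∈ A) → (∀ n, 0 ≤ l n) → HasSum l 1 →
    ∀ x : V, HasSum (fun n => l n • a n) x → x ∈ A

/-- If `A` is cs-closed, `G ⊆ D ⊆ cl(A)`, `G` is pre-cs-compact, and for
every `r > 0` and `d ∈ D` the set `(d - rG) ∩ A` is nonempty, then `D ⊆ αA` for every
`α > 1`. -/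
theorem subset_dilation_of_csClosed
    {V : Type*} [AddCommGroup V] [Module ℝ V] [TopologicalSpace V]
    [IsTopologicalAddGroup V] [ContinuousSMul ℝ V] [T2Space V]
    (A G D : Set V) (hA : IsCsClosed A) (hGD : G ⊆ D) (hDA : D ⊆ closure A)
    (hG : IsPreCsCompact G)
    (h : ∀ r : ℝ, 0 < r → ∀ d ∈ D, ∃ g ∈ G, d - r • g ∈ A)
    (α : ℝ) (hα : 1 < α) : D ⊆ α • A := by
  intro d hd
  have hα0 : (0:ℝ) < α := lt_trans one_pos hα
  have hinv0 : 0 < α⁻¹ := inv_pos.mpr hα0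
  have hinv1 : α⁻¹ < 1 := inv_lt_one_of_one_lt₀ hα
  set r : ℝ := 1 - α⁻¹ with hrdef
  have hr0 : 0 < r := by simp only [hrdef]; linarith
  have hr1 : r < 1 := by simp only [hrdef]; linarith
  choose gf hgG hgA using h r hr0
  -- the iterated sequence in D
  let seq : ℕ → {x : V // x ∈ D} := fun n =>
    Nat.rec ⟨d, hd⟩ (fun _ p => ⟨gf p.1 p.2, hGD (hgG p.1 p.2)⟩) n
  set gs : ℕ → V := fun n => gf (seq n).1 (seq n).2 with hgs
  have hseq_succ : ∀ n, (seq (n+1)).1 = gs n := fun n => rfl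
  have hgsG : ∀ n, gs n ∈ G := fun n => hgG _ _
  set a : ℕ → V := fun n => (seq n).1 - r • gs n with ha
  have haA : ∀ n, a n ∈ A := fun n => hgA _ _
  -- the coefficient series
  set l : ℕ → ℝ := fun n => α⁻¹ * r ^ n with hl
  have hlnn : ∀ n, 0 ≤ l n := fun n =>
    mul_nonneg (le_of_lt hinv0) (pow_nonneg (le_of_lt hr0) n)
  have hlsum : HasSum l 1 := by
    have := (hasSum_geometric_of_lt_one (le_of_lt hr0) hr1).mul_left α⁻¹
    have h1r : 1 - r = α⁻¹ := by simp [hrdef]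
    rw [h1r] at this
    simpa [inv_mul_cancel₀ (ne_of_gt hα0)] using this
  obtain ⟨x, hx⟩ := hG gs l hgsG hlnn hlsum
  -- f n = r^n • seq n
  set f : ℕ → V := fun n => r ^ n • (seq n).1 with hf
  have hshift : HasSum (fun n => f (n+1)) ((α * r) • x) := by
    have := hx.const_smul (α * r)
    refine this.congr_fun fun n => ?_
    simp only [hf, hseq_succ, hl, smul_smul]
    congr 1
    field_simp [ne_of_gt hα0]
    ring
  have hfsum : HasSum f ((α * r) • x + d) := by
    have := (hasSum_nat_add_iff (f := f) 1).mp hshift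
    simpa [hf, Finset.sum_range_one, show (seq 0).1 = d from rfl] using this
  have hasum : HasSum (fun n => r ^ n • a n) d := by
    have hsub := hfsum.sub hshift
    have : ((α * r) • x + d) - (α * r) • x = d := by abel
    rw [this] at hsub
    refine hsub.congr_fun fun n => ?_
    simp only [hf, ha, hseq_succ, smul_sub, smul_smul, pow_succ]
  have hmem : α⁻¹ • d ∈ A := by
    refine hA a l haA hlnn hlsum (α⁻¹ • d) ?_
    have := hasum.const_smul α⁻¹
    refine this.congr_fun fun n => ?_
    simp [hl, smul_smul]
  exact ⟨α⁻¹ • d, hmem, by show α • α⁻¹ • d = d; rw [smul_inv_smul₀ (ne_of_gt hα0)]⟩
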